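/- A group G is perfect and equal to the set of products of at most c commutators for some constant c if and only if the abelianization of every ultrapower of G (with respect to a non-principal ultrafilter on ℕ) is trivial. -/

import Mathlib

open Filter
open scoped commutatorElement

/-- `g` is a product of at most `c` commutators. -/
def IsProdOfComms {G : Type*} [Group G] (c : ℕ) (g : G) : Prop :=
  ∃ l : List G, l.length ≤ c ∧ (∀ x ∈ l, ∃ a b : G, x = ⁅a, b⁆) ∧ l.prod = g

/-- From triviality of the abelianization, every element is a product of commutators. -/
lemma exists_comm_list_of_subsingleton {H : Type*} [Group H]
    (h : Subsingleton (Abelianization H)) (x : H) :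
    ∃ l : List H, (∀ y ∈ l, ∃ a b : H, y = ⁅a, b⁆) ∧ l.prod = x := by
  have hx : x ∈ commutator H := by
    have h1 : (Abelianization.of x : Abelianization H) = Abelianization.of 1 :=
      Subsingleton.elim _ _
    rw [map_one] at h1
    exact (QuotientGroup.eq_one_iff x).mp h1
  rw [commutator_eq_closure, ← Subgroup.mem_toSubmonoid, Subgroup.closure_toSubmonoid] at hx
  obtain ⟨l, hl, hprod⟩ := Submonoid.exists_list_of_mem_closure hx
  refine ⟨l, fun y hy => ?_, hprod⟩
  rcases hl y hy with h1 | h2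
  · obtain ⟨a, b, hab⟩ := h1
    exact ⟨a, b, hab.symm⟩
  · obtain ⟨a, b, hab⟩ := Set.mem_inv.mp h2
    exact ⟨b, a, by rw [← commutatorElement_inv, hab, inv_inv]⟩

/-- A germ of pointwise products of ≤ c commutators is a product of c commutators of germs. -/
lemma germ_comm_list {U : Ultrafilter ℕ} {G : Type*} [Group G] :
    ∀ (c : ℕ) (f : ℕ → G), (∀ n, IsProdOfComms c (f n)) →
      ∃ L : List (Filter.Germ (U : Filter ℕ) G),
        (∀ y ∈ L, ∃ a b : Filter.Germ (U : Filter ℕ) G, y = ⁅a, b⁆) ∧ L.prod = (↑f : Filter.Germ (U : Filter ℕ) G) := by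
  intro c
  induction c with
  | zero =>
    intro f hf
    refine ⟨[], by simp, ?_⟩
    have : f = fun _ => (1 : G) := by
      funext n
      obtain ⟨l, hlen, -, hprod⟩ := hf n
      rw [List.length_eq_zero_iff.mp (Nat.le_zero.mp hlen)] at hprod
      exact hprod.symm
    simp [this, ← Filter.Germ.coe_one]
    rfl
  | succ c ih =>
    intro f hf
    have hdec : ∀ n, ∃ p : G × G × G, f n = ⁅p.1, p.2.1⁆ * p.2.2 ∧ IsProdOfComms c p.2.2 := by
      intro n
      obtain ⟨l, hlen, hcomm, hprod⟩ := hf n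
      match l, hlen, hcomm, hprod with
      | [], _, _, hprod =>
        exact ⟨⟨1, 1, 1⟩, by simp [← hprod], ⟨[], by simp⟩⟩
      | x :: t, hlen, hcomm, hprod =>
        obtain ⟨a, b, hab⟩ := hcomm x (by simp)
        refine ⟨⟨a, b, t.prod⟩, by simp [← hprod, hab], t, ?_, fun y hy => hcomm y (by simp [hy]), rfl⟩
        simpa using Nat.succ_le_succ_iff.mp hlen
    choose p hp1 hp2 using hdec
    obtain ⟨L, hL, hLprod⟩ := ih (fun n => (p n).2.2) hp2
    refine ⟨⁅(↑(fun n => (p n).1) : Filter.Germ (U : Filter ℕ) G), ↑(fun n => (p n).2.1)⁆ :: L,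
      ?_, ?_⟩
    · rintro y hy
      rcases List.mem_cons.mp hy with rfl | hy
      · exact ⟨_, _, rfl⟩
      · exact hL y hy
    · rw [List.prod_cons, hLprod]
      have : f = fun n => ⁅(p n).1, (p n).2.1⁆ * (p n).2.2 := funext hp1
      rw [this]
      simp only [commutatorElement_def, ← Filter.Germ.coe_mul, ← Filter.Germ.coe_inv]
      rfl

/-- A product of a list of commutators of germs is the germ of pointwise products of
`L.length` commutators. -/
lemma germ_comm_list_rev {U : Ultrafilter ℕ} {G : Type*} [Group G] :
    ∀ L : List (Filter.Germ (U : Filter ℕ) G),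
      (∀ y ∈ L, ∃ a b : Filter.Germ (U : Filter ℕ) G, y = ⁅a, b⁆) →
      ∃ F : ℕ → G, (↑F : Filter.Germ (U : Filter ℕ) G) = L.prod ∧
        ∀ n, IsProdOfComms L.length (F n) := by
  intro L
  induction L with
  | nil =>
    intro _
    refine ⟨fun _ => 1, ?_, fun n => ⟨[], by simp⟩⟩
    simp [← Filter.Germ.coe_one]
    rfl
  | cons y t ih =>
    intro hL
    obtain ⟨a, b, rfl⟩ := hL y (by simp)
    obtain ⟨F', hF'1, hF'2⟩ := ih (fun z hz => hL z (by simp [hz]))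
    induction a using Filter.Germ.inductionOn with
    | h fa =>
      induction b using Filter.Germ.inductionOn with
      | h fb =>
        refine ⟨fun n => ⁅fa n, fb n⁆ * F' n, ?_, ?_⟩
        · rw [List.prod_cons, ← hF'1]
          simp only [commutatorElement_def, ← Filter.Germ.coe_mul, ← Filter.Germ.coe_inv]
          rfl
        · intro n
          obtain ⟨l, hlen, hcomm, hprod⟩ := hF'2 n
          refine ⟨⁅fa n, fb n⁆ :: l, by simpa using Nat.succ_le_succ hlen, ?_, by simp [hprod]⟩
          rintro x hx
          rcases List.mem_cons.mp hx with rfl | hx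
          · exact ⟨_, _, rfl⟩
          · exact hcomm x hx

/-- a group `G` is perfect with `G` equal to the set of products of at most `c`
commutators (for some `c`) iff the abelianization of every ultrapower of `G` with respect to a
non-principal ultrafilter on `ℕ` is trivial. -/
theorem perfect_bounded_comm_iff_ultrapower_abelianization_trivial
    (G : Type*) [Group G] :
    (commutator G = ⊤ ∧ ∃ c : ℕ, ∀ g : G, IsProdOfComms c g) ↔
      (∀ U : Ultrafilter ℕ, (∀ a : ℕ, (U : Filter ℕ) ≠ pure a) →
        Subsingleton (Abelianization (Filter.Germ (U : Filter ℕ) G))) := by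
  constructor
  · rintro ⟨-, c, hc⟩ U -
    have htop : commutator (Filter.Germ (U : Filter ℕ) G) = ⊤ := by
      rw [Subgroup.eq_top_iff']
      intro x
      induction x using Filter.Germ.inductionOn with
      | h f =>
        obtain ⟨L, hL, hLprod⟩ := germ_comm_list (U := U) c f (fun n => hc (f n))
        rw [← hLprod, commutator_eq_closure]
        exact Subgroup.list_prod_mem _ fun y hy => by
          obtain ⟨a, b, rfl⟩ := hL y hy
          exact Subgroup.subset_closure (commutator_mem_commutatorSet a b)
    unfold Abelianization
    rw [htop]
    exact QuotientGroup.subsingleton_quotient_top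
  · intro h
    have hU : ∀ a : ℕ, ((hyperfilter ℕ : Ultrafilter ℕ) : Filter ℕ) ≠ pure a := by
      intro a ha
      have h2 : ({a} : Set ℕ) ∈ ((hyperfilter ℕ : Ultrafilter ℕ) : Filter ℕ) := by
        rw [ha]; exact mem_pure.mpr rfl
      exact (Set.finite_singleton a).notMem_hyperfilter (Ultrafilter.mem_coe.mp h2)
    have hsub := h (hyperfilter ℕ) hU
    constructor
    · rw [Subgroup.eq_top_iff']
      intro g
      obtain ⟨L, hL, hLprod⟩ := exists_comm_list_of_subsingleton hsub
        (↑(fun _ => g : ℕ → G) : Filter.Germ (hyperfilter ℕ : Filter ℕ) G)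
      obtain ⟨F, hF1, hF2⟩ := germ_comm_list_rev L hL
      rw [hLprod] at hF1
      have hev : F =ᶠ[(hyperfilter ℕ : Filter ℕ)] (fun _ => g) := Filter.Germ.coe_eq.mp hF1
      obtain ⟨n, hn⟩ := hev.exists
      obtain ⟨l, -, hcomm, hprod⟩ := hF2 n
      simp only [] at hn
      rw [hn] at hprod
      rw [← hprod, commutator_eq_closure]
      exact Subgroup.list_prod_mem _ fun y hy => by
        obtain ⟨a, b, rfl⟩ := hcomm y hy
        exact Subgroup.subset_closure (commutator_mem_commutatorSet a b)
    · by_contra hbound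
      push_neg at hbound
      choose g hg using hbound
      obtain ⟨L, hL, hLprod⟩ := exists_comm_list_of_subsingleton hsub
        (↑g : Filter.Germ (hyperfilter ℕ : Filter ℕ) G)
      obtain ⟨F, hF1, hF2⟩ := germ_comm_list_rev L hL
      rw [hLprod] at hF1
      have hev : F =ᶠ[(hyperfilter ℕ : Filter ℕ)] g := Filter.Germ.coe_eq.mp hF1
      have hsubset : {n | F n = g n} ⊆ {n | n < L.length} := by
        intro n hn
        by_contra hlt
        apply hg n
        obtain ⟨l, hlen, hcomm, hprod⟩ := hF2 n
        exact ⟨l, hlen.trans (Nat.le_of_not_lt hlt), hcomm, by rw [hprod]; exact hn⟩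
      have hfin : ({n | F n = g n} : Set ℕ).Finite :=
        (Set.finite_Iio L.length).subset hsubset
      exact hfin.notMem_hyperfilter (Ultrafilter.mem_coe.mp hev)
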